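/- arXiv:2208.07821 — 3 statements merged into one kernel-verified Lean document; each statement's English description precedes it below -/
import Mathlib

section
/- For x, y ∈ ℝ with x - y ≠ 0, the matrices C¹ = [[x, 1],[((x-y)⁴+1)/(4(x-y)²) - x², -x]] and C² = [[y, 1],[((x-y)⁴+1)/(4(x-y)²) - y², -y]] satisfy C¹C² + C²C¹ = (1/2)(1/(x-y)² - (x-y)²)·I and det(C²C¹) = ((x-y)⁴+1)²/(16(x-y)⁴). In particular, when x - y = ±1 the matrices anticommute and C²C¹ is invertible. -/
open Matrix Complex

/-- Example 4.5(a): for real `x ≠ y`, the type II Clifford matrices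
satisfy the stated anticommutator and determinant formulae; in particular for
`x - y = ±1` they anticommute and `C²C¹` is invertible. -/
theorem stmt12 (x y : ℝ) (hxy : x - y ≠ 0) :
    let C1 : Matrix (Fin 2) (Fin 2) ℂ :=
      !![(x : ℂ), 1;
         (((x : ℂ) - y) ^ 4 + 1) / (4 * ((x : ℂ) - y) ^ 2) - (x : ℂ) ^ 2, -(x : ℂ)]
    let C2 : Matrix (Fin 2) (Fin 2) ℂ :=
      !![(y : ℂ), 1;
         (((x : ℂ) - y) ^ 4 + 1) / (4 * ((x : ℂ) - y) ^ 2) - (y : ℂ) ^ 2, -(y : ℂ)]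
    C1 * C2 + C2 * C1 =
        ((1 / 2 : ℂ) * (1 / ((x : ℂ) - y) ^ 2 - ((x : ℂ) - y) ^ 2)) •
          (1 : Matrix (Fin 2) (Fin 2) ℂ) ∧
      (C2 * C1).det = ((((x : ℂ) - y) ^ 4 + 1) ^ 2) / (16 * ((x : ℂ) - y) ^ 4) ∧
      ((x - y = 1 ∨ x - y = -1) → C1 * C2 + C2 * C1 = 0 ∧ IsUnit (C2 * C1)) := by
  intro C1 C2
  have hc : ((x : ℂ) - y) ≠ 0 := by
    have : ((x - y : ℝ) : ℂ) ≠ 0 := Complex.ofReal_ne_zero.mpr hxy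
    push_cast at this
    exact this
  have hc2 : ((x : ℂ) - y) ^ 2 ≠ 0 := pow_ne_zero _ hc
  have hanti : C1 * C2 + C2 * C1 =
      ((1 / 2 : ℂ) * (1 / ((x : ℂ) - y) ^ 2 - ((x : ℂ) - y) ^ 2)) •
        (1 : Matrix (Fin 2) (Fin 2) ℂ) := by
    simp only [C1, C2]
    ext i j
    fin_cases i <;> fin_cases j
    all_goals try simp [Matrix.mul_apply, Fin.sum_univ_two, Matrix.one_apply]
    all_goals try field_simp
    all_goals try ring
  have hdet : (C2 * C1).det = ((((x : ℂ) - y) ^ 4 + 1) ^ 2) / (16 * ((x : ℂ) - y) ^ 4) := by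
    simp only [C1, C2, Matrix.det_mul, Matrix.det_fin_two_of]
    field_simp
    ring
  refine ⟨hanti, hdet, ?_⟩
  intro h
  have h1 : ((x : ℂ) - y) ^ 2 = 1 := by
    rcases h with h | h <;>
    · have : ((x : ℂ) - y) = ((x - y : ℝ) : ℂ) := by push_cast; ring
      rw [this, h]; norm_num
  constructor
  · rw [hanti, h1]; norm_num
  · rw [Matrix.isUnit_iff_isUnit_det, hdet]
    have : ((x : ℂ) - y) ^ 4 = 1 := by
      have : ((x : ℂ) - y) ^ 4 = (((x : ℂ) - y) ^ 2) ^ 2 := by ring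
      rw [this, h1]; norm_num
    rw [this]
    norm_num
end

section
/- For the Dirac operator on M₂(ℂ)⊗ℂ² given by (D̸ψ)_β = (i/(2√2))((σ¹ψ_α + ψ_α σ²)(σ¹)^α{}_β + ε'(ψ_α σ¹ + σ²ψ_α)(σ³)^α{}_β) with ε' = ±1, D̸ is antihermitian with respect to the inner product ⟨φ,ψ⟩ = Tr(φ_α† ψ_α): that is, ⟨D̸φ,ψ⟩ = -⟨φ,D̸ψ⟩ for all φ, ψ ∈ M₂(ℂ)². -/
open Matrix Complex

noncomputable def pauli1 : Matrix (Fin 2) (Fin 2) ℂ := !![0, 1; 1, 0]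
noncomputable def pauli2 : Matrix (Fin 2) (Fin 2) ℂ := !![0, -Complex.I; Complex.I, 0]
noncomputable def pauli3 : Matrix (Fin 2) (Fin 2) ℂ := !![1, 0; 0, -1]

/-- The geometric Dirac operator on `M₂(ℂ) ⊗ ℂ²`:
`(D̸ψ)_β = (i/(2√2))((σ¹ψ_α + ψ_ασ²)(σ¹)^α_β + ε'(ψ_ασ¹ + σ²ψ_α)(σ³)^α_β)`. -/
noncomputable def Dirac (ε' : ℂ) (ψ : Fin 2 → Matrix (Fin 2) (Fin 2) ℂ) :
    Fin 2 → Matrix (Fin 2) (Fin 2) ℂ :=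
  fun β => (Complex.I / (2 * (Real.sqrt 2 : ℂ))) •
    ∑ α : Fin 2,
      ((pauli1 α β) • (pauli1 * ψ α + ψ α * pauli2) +
        (ε' * pauli3 α β) • (ψ α * pauli1 + pauli2 * ψ α))

/-- The spinor inner product `⟨φ,ψ⟩ = Tr(φ_α† ψ_α)` (sum over `α`). -/
noncomputable def spinInner (φ ψ : Fin 2 → Matrix (Fin 2) (Fin 2) ℂ) : ℂ :=
  ∑ α : Fin 2, ((φ α)ᴴ * ψ α).trace

set_option maxHeartbeats 3000000 in
/-- the Dirac operator is antihermitian: `⟨D̸φ,ψ⟩ = -⟨φ,D̸ψ⟩`. -/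
theorem stmt16 (ε' : ℂ) (hε' : ε' = 1 ∨ ε' = -1)
    (φ ψ : Fin 2 → Matrix (Fin 2) (Fin 2) ℂ) :
    spinInner (Dirac ε' φ) ψ = -spinInner φ (Dirac ε' ψ) := by
  rcases hε' with h | h <;> subst h <;>
  · simp only [spinInner, Dirac, pauli1, pauli2, pauli3, Matrix.trace, Matrix.diag_apply,
      Matrix.mul_apply, Matrix.smul_apply, Matrix.add_apply, Matrix.conjTranspose_apply,
      Fin.sum_univ_two, Finset.sum_apply, Matrix.of_apply, Matrix.cons_val', Matrix.cons_val_zero,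
      Matrix.cons_val_one, Matrix.head_cons, Matrix.head_fin_const, Matrix.empty_val',
      Matrix.cons_val_fin_one, smul_eq_mul, _root_.map_mul, map_add, map_div₀, _root_.map_one,
      map_neg, map_ofNat, Complex.conj_I, Complex.conj_ofReal, map_sum, Complex.star_def,
      map_inv₀, map_pow, _root_.map_zero, Complex.I_sq]
    ring
end

section
/- For the Dirac operator (D̸ψ)_β = (i/(2√2))((σ¹ψ_α + ψ_α σ²)(σ¹)^α{}_β + ε'(ψ_α σ¹ + σ²ψ_α)(σ³)^α{}_β) with ε' = ±1 acting on pairs ψ = (ψ₁,ψ₂) of 2×2 complex matrices, one has (D̸²ψ)_β = -(1/2)ψ_β - (1/4)(σ¹ψ_β σ² + σ²ψ_β σ¹) + (ε'/4){σ³, ψ_α}(σ²)^α{}_β. -/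
set_option maxHeartbeats 2000000

open Matrix Complex

lemma p11 : pauli1 * pauli1 = 1 := by
  ext i j; fin_cases i <;> fin_cases j <;> simp [pauli1, Matrix.mul_apply, Fin.sum_univ_two, Matrix.one_apply]
lemma p22 : pauli2 * pauli2 = 1 := by
  ext i j; fin_cases i <;> fin_cases j <;> simp [pauli2, Matrix.mul_apply, Fin.sum_univ_two, Matrix.one_apply]
lemma p12 : pauli1 * pauli2 = Complex.I • pauli3 := by
  ext i j; fin_cases i <;> fin_cases j <;> simp [pauli1, pauli2, pauli3, Matrix.mul_apply, Fin.sum_univ_two]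
lemma p21 : pauli2 * pauli1 = -(Complex.I • pauli3) := by
  ext i j; fin_cases i <;> fin_cases j <;> simp [pauli1, pauli2, pauli3, Matrix.mul_apply, Fin.sum_univ_two]

/-- `(D̸²ψ)_β = -(1/2)ψ_β - (1/4)(σ¹ψ_βσ² + σ²ψ_βσ¹)
+ (ε'/4){σ³,ψ_α}(σ²)^α_β`. -/
theorem stmt17 (ε' : ℂ) (hε' : ε' = 1 ∨ ε' = -1)
    (ψ : Fin 2 → Matrix (Fin 2) (Fin 2) ℂ) (β : Fin 2) :
    Dirac ε' (Dirac ε' ψ) β =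
      -((1 / 2 : ℂ) • ψ β)
        - (1 / 4 : ℂ) • (pauli1 * ψ β * pauli2 + pauli2 * ψ β * pauli1)
        + (ε' / 4) • ∑ α : Fin 2, (pauli2 α β) • (pauli3 * ψ α + ψ α * pauli3) := by
  have hs : ((Real.sqrt 2 : ℝ) : ℂ) * ((Real.sqrt 2 : ℝ) : ℂ) = 2 := by
    norm_cast; exact Real.mul_self_sqrt (by norm_num)
  have hs2 : ((Real.sqrt 2 : ℝ) : ℂ)^2 = 2 := by rw [sq]; exact hs
  have hs4 : ((Real.sqrt 2 : ℝ) : ℂ)^4 = 4 := by rw [show (4:ℕ)=2*2 from rfl, pow_mul, hs2]; norm_num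
  have hs0 : ((Real.sqrt 2 : ℝ) : ℂ) ≠ 0 := fun h => by rw [h] at hs; norm_num at hs
  have e1 : pauli1 (0:Fin 2) 0 = 0 := by simp [pauli1]
  have e2 : pauli1 (0:Fin 2) 1 = 1 := by simp [pauli1]
  have e3 : pauli1 (1:Fin 2) 0 = 1 := by simp [pauli1]
  have e4 : pauli1 (1:Fin 2) 1 = 0 := by simp [pauli1]
  have f1 : pauli2 (0:Fin 2) 0 = 0 := by simp [pauli2]
  have f2 : pauli2 (0:Fin 2) 1 = -Complex.I := by simp [pauli2]
  have f3 : pauli2 (1:Fin 2) 0 = Complex.I := by simp [pauli2]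
  have f4 : pauli2 (1:Fin 2) 1 = 0 := by simp [pauli2]
  have g1 : pauli3 (0:Fin 2) 0 = 1 := by simp [pauli3]
  have g2 : pauli3 (0:Fin 2) 1 = 0 := by simp [pauli3]
  have g3 : pauli3 (1:Fin 2) 0 = 0 := by simp [pauli3]
  have g4 : pauli3 (1:Fin 2) 1 = -1 := by simp [pauli3]
  rcases hε' with hε | hε <;> subst hε <;>
    rcases (by omega : β = 0 ∨ β = 1) with hβ | hβ <;>
    subst hβ <;>
    (simp only [Dirac, Fin.sum_univ_two, e1, e2, e3, e4, f1, f2, f3, f4, g1, g2, g3, g4,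
        smul_add, mul_add, add_mul, Matrix.mul_smul, Matrix.smul_mul, smul_smul,
        zero_smul, one_smul, mul_zero, mul_one, zero_add, add_zero, mul_neg, neg_smul,
        ← mul_assoc];
      simp only [p11, p12, p21, p22, mul_assoc, one_mul, mul_one,
        Matrix.smul_mul, Matrix.mul_smul, Matrix.one_mul, Matrix.mul_one,
        mul_neg, neg_mul, smul_neg, neg_smul, smul_smul, neg_neg];
      simp only [← mul_assoc];
      match_scalars) <;>
    (try field_simp;
     try ring_nf;
     try simp only [Complex.I_sq, hs2, hs4];
     try ring_nf;
     try norm_num)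
end
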